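/- For every integer n ≥ 3, every odd sign vector a ∈ {−1, +1}^n, and every noncontextual behavior B on the n-cycle scenario Υ_n, the noncontextuality inequality I_a(B) ≤ n − 2 holds. -/

import Mathlib

noncomputable section

/-- A compatibility scenario: a finite set of measurements `M`, finite nonempty
outcome sets `O x` for each measurement, and an antichain `C` of maximal contexts. -/
structure Scenario where
  M : Type
  [fintypeM : Fintype M]
  [decEqM : DecidableEq M]
  O : M → Type
  [fintypeO : ∀ x, Fintype (O x)]
  [decEqO : ∀ x, DecidableEq (O x)]
  [nonemptyO : ∀ x, Nonempty (O x)]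
  C : Finset (Finset M)
  antichain : ∀ γ ∈ C, ∀ γ' ∈ C, γ ⊆ γ' → γ = γ'

attribute [instance] Scenario.fintypeM Scenario.decEqM Scenario.fintypeO
  Scenario.decEqO Scenario.nonemptyO

/-- The elements of a set of measurements, as a type. -/
def Scenario.El (S : Scenario) (γ : Finset S.M) : Type := {x : S.M // x ∈ γ}

instance (S : Scenario) (γ : Finset S.M) : Fintype (S.El γ) :=
  show Fintype {x : S.M // x ∈ γ} from inferInstance

instance (S : Scenario) (γ : Finset S.M) : DecidableEq (S.El γ) :=
  show DecidableEq {x : S.M // x ∈ γ} from inferInstance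

/-- Joint outcomes `O^γ` of a set of measurements `γ`. -/
def Scenario.JO (S : Scenario) (γ : Finset S.M) : Type := (x : S.El γ) → S.O x.1

instance (S : Scenario) (γ : Finset S.M) : Fintype (S.JO γ) :=
  show Fintype ((x : S.El γ) → S.O x.1) from inferInstance

instance (S : Scenario) (γ : Finset S.M) : DecidableEq (S.JO γ) :=
  show DecidableEq ((x : S.El γ) → S.O x.1) from inferInstance

instance (S : Scenario) (γ : Finset S.M) : Nonempty (S.JO γ) :=
  ⟨fun _ => Classical.arbitrary _⟩

/-- Global outcome assignments `O^M`. -/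
abbrev Scenario.Glob (S : Scenario) : Type := (x : S.M) → S.O x

/-- Restriction of a global assignment to a set of measurements. -/
def Scenario.restr (S : Scenario) (γ : Finset S.M) (o : S.Glob) : S.JO γ :=
  fun x => o x.1

/-- The (maximal) contexts of a scenario. -/
def Scenario.Ctx (S : Scenario) : Type := {γ : Finset S.M // γ ∈ S.C}

instance (S : Scenario) : Fintype S.Ctx :=
  show Fintype {γ : Finset S.M // γ ∈ S.C} from inferInstance

instance (S : Scenario) : DecidableEq S.Ctx :=
  show DecidableEq {γ : Finset S.M // γ ∈ S.C} from inferInstance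

/-- A behavior (box): a family of real-valued functions, one for each maximal context. -/
def Behavior (S : Scenario) : Type := (γ : S.Ctx) → S.JO γ.1 → ℝ

/-- The family forms a probability distribution on each maximal context. -/
def IsProb (S : Scenario) (B : Behavior S) : Prop :=
  ∀ γ : S.Ctx, (∀ t, 0 ≤ B γ t) ∧ (∑ t, B γ t = 1)

/-- Kochen–Specker noncontextuality: existence of a global section, i.e. a probability
distribution on `O^M` whose marginal on each maximal context equals the behavior. -/
def IsNC (S : Scenario) (B : Behavior S) : Prop :=
  ∃ pM : S.Glob → ℝ, (∀ o, 0 ≤ pM o) ∧ (∑ o, pM o = 1) ∧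
    ∀ (γ : S.Ctx) (t : S.JO γ.1),
      B γ t = ∑ o : S.Glob, if S.restr γ.1 o = t then pM o else 0

/-- Restriction between nested sets of measurements. -/
def Scenario.restr2 (S : Scenario) {γ δ : Finset S.M} (h : δ ⊆ γ) (t : S.JO γ) :
    S.JO δ := fun x => t ⟨x.1, h x.2⟩

/-- The no-disturbance condition: marginals agree on intersections of contexts. -/
def IsND (S : Scenario) (B : Behavior S) : Prop :=
  ∀ γ γ' : S.Ctx, ∀ u : S.JO (γ.1 ∩ γ'.1),
    (∑ t : S.JO γ.1, if S.restr2 Finset.inter_subset_left t = u then B γ t else 0) =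
      (∑ t : S.JO γ'.1, if S.restr2 Finset.inter_subset_right t = u then B γ' t else 0)

/-- Factorizability: a noncontextual (hidden-variable) factorizable model. -/
def IsFactorizable (S : Scenario) (B : Behavior S) : Prop :=
  ∃ (k : ℕ) (q : Fin k → ℝ) (e : (x : S.M) → Fin k → S.O x → ℝ),
    (∀ l, 0 ≤ q l) ∧ (∑ l, q l = 1) ∧
    (∀ x l, (∀ o, 0 ≤ e x l o) ∧ (∑ o, e x l o = 1)) ∧
    ∀ (γ : S.Ctx) (t : S.JO γ.1),
      B γ t = ∑ l, q l * ∏ x : S.El γ.1, e x.1 l (t x)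

/-- The deterministic behavior induced by a global outcome assignment. -/
def detB (S : Scenario) (o : S.Glob) : Behavior S :=
  fun γ t => if S.restr γ.1 o = t then 1 else 0
/-- A noncontextual wiring with input scenario `S`, whose output scenario has the
measurements, maximal contexts and outcome sets of `T`.  It consists of a
noncontextual pre-processing behavior (given by its global section `pPre` on the
pre-processing outcome sets `OPre`), a function `f` selecting, from each
pre-processing context `β` and joint outcome `r`, a context of the input scenario,
a coordinatewise wiring `wmap` feeding every output measurement slot from a single
input measurement, and adaptively chosen noncontextual (factorizable)
post-processing boxes given by a hidden variable `φ` with distribution `q β r`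
and response functions `resp`. -/
structure Wiring (S T : Scenario) where
  OPre : T.M → Type
  [fintypeOPre : ∀ m, Fintype (OPre m)]
  [decEqOPre : ∀ m, DecidableEq (OPre m)]
  [nonemptyOPre : ∀ m, Nonempty (OPre m)]
  pPre : ((x : T.M) → OPre x) → ℝ
  pPre_nonneg : ∀ o, 0 ≤ pPre o
  pPre_sum : ∑ o, pPre o = 1
  f : (β : T.Ctx) → ((x : T.El β.1) → OPre x.1) → S.Ctx
  wmap : (β : T.Ctx) → (r : (x : T.El β.1) → OPre x.1) → T.El β.1 → S.El (f β r).1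
  nPhi : (β : T.Ctx) → ((x : T.El β.1) → OPre x.1) → ℕ
  q : (β : T.Ctx) → (r : (x : T.El β.1) → OPre x.1) → Fin (nPhi β r) → ℝ
  q_nonneg : ∀ β r φ, 0 ≤ q β r φ
  q_sum : ∀ β r, ∑ φ, q β r φ = 1
  resp : (β : T.Ctx) → (r : (x : T.El β.1) → OPre x.1) → (m : T.El β.1) →
    Fin (nPhi β r) → S.O (wmap β r m).1 → T.O m.1 → ℝ
  resp_nonneg : ∀ β r m φ o u, 0 ≤ resp β r m φ o u
  resp_sum : ∀ β r m φ o, ∑ u, resp β r m φ o u = 1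

attribute [instance] Wiring.fintypeOPre Wiring.decEqOPre Wiring.nonemptyOPre

/-- Marginal of the pre-processing behavior on a pre-processing context. -/
def Wiring.preB {S T : Scenario} (W : Wiring S T) (β : T.Ctx)
    (r : (x : T.El β.1) → W.OPre x.1) : ℝ :=
  ∑ o : (x : T.M) → W.OPre x,
    if (fun x : T.El β.1 => o x.1) = r then W.pPre o else 0

/-- The wired behavior `W(B)` on the output scenario. -/
def Wiring.apply {S T : Scenario} (W : Wiring S T) (B : Behavior S) : Behavior T :=
  fun β t =>
    ∑ r : (x : T.El β.1) → W.OPre x.1,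
      ∑ s : S.JO (W.f β r).1,
        W.preB β r * B (W.f β r) s *
          ∑ φ : Fin (W.nPhi β r),
            W.q β r φ * ∏ m : T.El β.1, W.resp β r m φ (s (W.wmap β r m)) (t m)

/-- Free convertibility of behaviors on a scenario by noncontextual wirings (whose
output scenario has the same maximal contexts and context-outcome sets). -/
def Arrow (S : Scenario) (B B' : Behavior S) : Prop :=
  ∃ W : Wiring S S, W.apply B = B'
/-- Successor modulo `n`. -/
def cycSucc {n : ℕ} (i : Fin n) : Fin n :=
  ⟨(i.1 + 1) % n, Nat.mod_lt _ (Nat.lt_of_le_of_lt (Nat.zero_le _) i.isLt)⟩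

/-- The maximal context `{x_i, x_{i+1 mod n}}` of the `n`-cycle scenario. -/
def cycCtx {n : ℕ} (i : Fin n) : Finset (Fin n) := {i, cycSucc i}

theorem cycSucc_ne {n : ℕ} (hn : 3 ≤ n) (i : Fin n) : i ≠ cycSucc i := by
  intro h
  have h1 : i.1 = (i.1 + 1) % n := congrArg Fin.val h
  rcases Nat.lt_or_ge (i.1 + 1) n with h3 | h3
  · rw [Nat.mod_eq_of_lt h3] at h1
    omega
  · have h2 : i.1 < n := i.isLt
    have h4 : i.1 + 1 = n := by omega
    rw [h4, Nat.mod_self] at h1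
    omega

/-- The `n`-cycle compatibility scenario: `n` dichotomic measurements with maximal
contexts `{x_i, x_{i+1 mod n}}`. -/
def cycleScenario (n : ℕ) (hn : 3 ≤ n) : Scenario where
  M := Fin n
  O := fun _ => Bool
  C := Finset.image (fun i : Fin n => cycCtx i) Finset.univ
  antichain := by
    intro γ hγ γ' hγ' hsub
    simp only [Finset.mem_image, Finset.mem_univ, true_and] at hγ hγ'
    obtain ⟨i, rfl⟩ := hγ
    obtain ⟨j, rfl⟩ := hγ'
    refine Finset.eq_of_subset_of_card_le hsub (le_of_eq ?_)
    show ({j, cycSucc j} : Finset (Fin n)).card = ({i, cycSucc i} : Finset (Fin n)).card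
    rw [Finset.card_pair (cycSucc_ne hn j), Finset.card_pair (cycSucc_ne hn i)]

theorem cycCtx_mem {n : ℕ} (hn : 3 ≤ n) (i : Fin n) :
    cycCtx i ∈ (cycleScenario n hn).C :=
  Finset.mem_image_of_mem _ (Finset.mem_univ i)

/-- The context `{x_i, x_{i+1}}` as a maximal context of the `n`-cycle scenario. -/
def cycCtxC {n : ℕ} (hn : 3 ≤ n) (i : Fin n) : (cycleScenario n hn).Ctx :=
  ⟨cycCtx i, cycCtx_mem hn i⟩

/-- The ±1 value of a Boolean outcome. -/
def sgn (b : Bool) : ℝ := if b then 1 else -1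

/-- Two-point correlator `⟨x_i x_{i+1}⟩` of a behavior at a maximal context. -/
def corrCtx {n : ℕ} {hn : 3 ≤ n} (B : Behavior (cycleScenario n hn))
    (γ : (cycleScenario n hn).Ctx) : ℝ :=
  ∑ t : (cycleScenario n hn).JO γ.1, (∏ x, sgn (t x)) * B γ t

/-- The `n`-cycle functional `I_a(B) = Σ_i a_i ⟨x_i x_{i+1}⟩`. -/
def Ifun {n : ℕ} (hn : 3 ≤ n) (a : Fin n → ℤ) (B : Behavior (cycleScenario n hn)) : ℝ :=
  ∑ i : Fin n, (a i : ℝ) * corrCtx B (cycCtxC hn i)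

/-- `a` is a `±1`-valued sign vector. -/
def IsSign {n : ℕ} (a : Fin n → ℤ) : Prop := ∀ i, a i = 1 ∨ a i = -1

/-- `a` has an odd number of entries equal to `-1`. -/
def IsOddSign {n : ℕ} (a : Fin n → ℤ) : Prop :=
  Odd (Finset.univ.filter fun i => a i = -1).card

theorem exists_edge {n : ℕ} {hn : 3 ≤ n} (γ : (cycleScenario n hn).Ctx) :
    ∃ i : Fin n, cycCtx i = γ.1 := by
  have h : γ.1 ∈ Finset.image (fun i : Fin n => cycCtx i) Finset.univ := γ.2
  obtain ⟨i, -, h2⟩ := Finset.mem_image.mp h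
  exact ⟨i, h2⟩

/-- The index `i` such that a maximal context is `{x_i, x_{i+1}}`. -/
def edgeOf {n : ℕ} (hn : 3 ≤ n) (γ : (cycleScenario n hn).Ctx) : Fin n :=
  (exists_edge γ).choose

/-- The behavior with prescribed two-point correlators `E i` and unbiased marginals:
`p_{γ_i}(s,t) = (1 + E i · s · t)/4`. -/
def corrBeh {n : ℕ} (hn : 3 ≤ n) (E : Fin n → ℝ) : Behavior (cycleScenario n hn) :=
  fun γ t => (1 + E (edgeOf hn γ) * ∏ x, sgn (t x)) / 4

/-- The strongly contextual nondisturbing vertex `B_a` with `p_{γ_i}(s,t) = (1 + a_i·s·t)/4`. -/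
def Ba {n : ℕ} (hn : 3 ≤ n) (a : Fin n → ℤ) : Behavior (cycleScenario n hn) :=
  corrBeh hn fun i => (a i : ℝ)

/-- The behavior `B_∅` with all outcomes equally likely. -/
def Bempty {n : ℕ} (hn : 3 ≤ n) : Behavior (cycleScenario n hn) :=
  corrBeh hn 0

/-- `B'_a = ((n-2)/n)·B_a + (2/n)·B_∅`. -/
def Ba' {n : ℕ} (hn : 3 ≤ n) (a : Fin n → ℤ) : Behavior (cycleScenario n hn) :=
  fun γ t => ((n : ℝ) - 2) / n * Ba hn a γ t + 2 / n * Bempty hn γ t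

/-- The element `ε·B_a + (1-ε)·B'_a` of the set `P_a`. -/
def Pbeh {n : ℕ} (hn : 3 ≤ n) (a : Fin n → ℤ) (ε : ℝ) : Behavior (cycleScenario n hn) :=
  fun γ t => ε * Ba hn a γ t + (1 - ε) * Ba' hn a γ t

/-- The family `B(α,ε) = α·B̃ + (1-α)·(ε·B_a + (1-ε)·B'_a)`, where `B̃` is the
deterministic noncontextual behavior induced by the global assignment `c`. -/
def Bae {n : ℕ} (hn : 3 ≤ n) (a : Fin n → ℤ) (c : (cycleScenario n hn).Glob) (α ε : ℝ) :
    Behavior (cycleScenario n hn) :=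
  fun γ t => α * detB _ c γ t + (1 - α) * Pbeh hn a ε γ t

/-- The yield monotone `y_a(B) = sup { I_a(B') : B' ∈ ND(Υ_n), B → B' }`. -/
def yieldM {n : ℕ} (hn : 3 ≤ n) (a : Fin n → ℤ) (B : Behavior (cycleScenario n hn)) : ℝ :=
  sSup {y : ℝ | ∃ B' : Behavior (cycleScenario n hn),
    IsProb _ B' ∧ IsND _ B' ∧ Arrow _ B B' ∧ y = Ifun hn a B'}

/-- The cost monotone `c_a(B) = inf { I_a(B') : B' ∈ P_a, B' → B } ∈ ℝ ∪ {+∞}`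
(with `inf ∅ = +∞`). -/
def costM {n : ℕ} (hn : 3 ≤ n) (a : Fin n → ℤ) (B : Behavior (cycleScenario n hn)) : EReal :=
  sInf {x : EReal | ∃ ε : ℝ, 0 ≤ ε ∧ ε ≤ 1 ∧ Arrow _ (Pbeh hn a ε) B ∧
    x = ((Ifun hn a (Pbeh hn a ε) : ℝ) : EReal)}
/-! Auxiliary lemmas for statement_3 -/

lemma prod_el_eq {S : Scenario} (γ : Finset S.M) (g : S.M → ℝ) :
    ∏ x : S.El γ, g x.1 = ∏ x ∈ γ, g x :=
  Finset.prod_coe_sort γ g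

lemma corr_detB {n : ℕ} (hn : 3 ≤ n) (c : (cycleScenario n hn).Glob) (i : Fin n) :
    corrCtx (hn := hn) (detB _ c) (cycCtxC hn i) = sgn (c i) * sgn (c (cycSucc i)) := by
  unfold corrCtx detB
  rw [Finset.sum_eq_single ((cycleScenario n hn).restr (cycCtxC hn i).1 c)]
  · rw [if_pos rfl, mul_one]
    have h1 : (∏ x : (cycleScenario n hn).El (cycCtxC hn i).1,
        sgn ((cycleScenario n hn).restr (cycCtxC hn i).1 c x)) =
        ∏ x ∈ (cycCtxC hn i).1, sgn (c x) := prod_el_eq _ (fun x => sgn (c x))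
    rw [h1]
    show (∏ x ∈ ({i, cycSucc i} : Finset (Fin n)), sgn (c x)) = _
    rw [Finset.prod_pair (cycSucc_ne hn i)]
  · intro t _ ht
    rw [if_neg (fun h => ht h.symm), mul_zero]
  · intro h
    exact absurd (Finset.mem_univ _) h

lemma cycSucc_inj {n : ℕ} : Function.Injective (cycSucc (n := n)) := by
  intro i j h
  have hi := i.isLt
  have hj := j.isLt
  have h' : (i.1 + 1) % n = (j.1 + 1) % n := congrArg Fin.val h
  apply Fin.ext
  rcases Nat.lt_or_ge (i.1 + 1) n with hi1 | hi1 <;>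
    rcases Nat.lt_or_ge (j.1 + 1) n with hj1 | hj1
  · rw [Nat.mod_eq_of_lt hi1, Nat.mod_eq_of_lt hj1] at h'; omega
  · have hj2 : j.1 + 1 = n := by omega
    rw [Nat.mod_eq_of_lt hi1, hj2, Nat.mod_self] at h'; omega
  · have hi2 : i.1 + 1 = n := by omega
    rw [hi2, Nat.mod_self, Nat.mod_eq_of_lt hj1] at h'; omega
  · omega

lemma sum_pm_le {n : ℕ} (t : Fin n → ℤ) (ht : ∀ i, t i = 1 ∨ t i = -1)
    (hp : ∏ i, t i = -1) : ∑ i, t i ≤ (n : ℤ) - 2 := by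
  obtain ⟨j, hj⟩ : ∃ j, t j = -1 := by
    by_contra h
    push_neg at h
    have h1 : ∀ i, t i = 1 := fun i => (ht i).resolve_right (h i)
    simp [h1] at hp
  have h2 : ∑ x ∈ Finset.univ.erase j, t x + t j = ∑ i, t i :=
    Finset.sum_erase_add _ _ (Finset.mem_univ j)
  have h3 : ∑ x ∈ Finset.univ.erase j, t x ≤ (Finset.univ.erase j).card • (1 : ℤ) :=
    Finset.sum_le_card_nsmul _ _ 1 (fun i _ => by rcases ht i with h | h <;> omega)
  have h4 : (Finset.univ.erase j).card = n - 1 := by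
    rw [Finset.card_erase_of_mem (Finset.mem_univ j), Finset.card_univ, Fintype.card_fin]
  have hn0 : 1 ≤ n := Nat.pos_of_ne_zero (by rintro rfl; exact absurd j.isLt (by omega))
  rw [h4] at h3
  have h5 : ((n - 1 : ℕ) : ℤ) = (n : ℤ) - 1 := by push_cast [hn0]; ring
  simp only [nsmul_eq_mul, mul_one, h5] at h3
  omega

lemma prod_sign_neg {n : ℕ} (a : Fin n → ℤ) (ha : IsSign a) (hodd : IsOddSign a) :
    ∏ i, a i = -1 := by
  have h : ∏ i, a i = (-1 : ℤ) ^ (Finset.univ.filter fun i => a i = -1).card := by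
    rw [← Finset.prod_filter_mul_prod_filter_not Finset.univ (fun i => a i = -1)]
    rw [Finset.prod_congr rfl (fun i hi => (Finset.mem_filter.mp hi).2),
        Finset.prod_const]
    have h2 : ∀ i ∈ Finset.univ.filter (fun i => ¬ a i = -1), a i = 1 := by
      intro i hi
      exact (ha i).resolve_right (Finset.mem_filter.mp hi).2
    rw [Finset.prod_congr rfl h2, Finset.prod_const, one_pow, mul_one]
  rw [h, Odd.neg_one_pow hodd]

lemma Ifun_detB_le {n : ℕ} (hn : 3 ≤ n) (a : Fin n → ℤ) (ha : IsSign a)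
    (hodd : IsOddSign a) (c : (cycleScenario n hn).Glob) :
    Ifun hn a (detB _ c) ≤ (n : ℝ) - 2 := by
  set s : Fin n → ℤ := fun i => if (show Bool from c i) = true then 1 else -1 with hs
  have hspm : ∀ i, s i = 1 ∨ s i = -1 := by
    intro i
    rw [hs]
    by_cases h : (show Bool from c i) = true <;> simp [h]
  have hsgn : ∀ i, sgn (c i) = ((s i : ℤ) : ℝ) := by
    intro i
    rw [hs]
    by_cases h : (show Bool from c i) = true <;> simp [sgn, h]
  have hIf : Ifun hn a (detB _ c) = ((∑ i, a i * (s i * s (cycSucc i)) : ℤ) : ℝ) := by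
    unfold Ifun
    push_cast
    refine Finset.sum_congr rfl fun i _ => ?_
    rw [corr_detB hn c i, hsgn i, hsgn (cycSucc i)]
  rw [hIf]
  have hZ : (∑ i, a i * (s i * s (cycSucc i)) : ℤ) ≤ (n : ℤ) - 2 := by
    apply sum_pm_le
    · intro i
      rcases ha i with h | h <;> rcases hspm i with h' | h' <;>
        rcases hspm (cycSucc i) with h'' | h'' <;>
        simp only [h, h', h''] <;> norm_num
    · have h1 : (∏ i, a i * (s i * s (cycSucc i))) =
          (∏ i, a i) * ((∏ i, s i) * ∏ i, s (cycSucc i)) := by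
        rw [Finset.prod_mul_distrib, Finset.prod_mul_distrib]
      have hbij : Function.Bijective (cycSucc (n := n)) :=
        Finite.injective_iff_bijective.mp cycSucc_inj
      have h2 : (∏ i, s (cycSucc i)) = ∏ i, s i :=
        Function.Bijective.prod_comp hbij s
      have h3 : (∏ i, s i) * (∏ i, s i) = 1 := by
        rw [← Finset.prod_mul_distrib]
        rw [Finset.prod_congr rfl (fun i _ => show s i * s i = 1 by
          rcases hspm i with h | h <;> rw [h] <;> norm_num)]
        exact Finset.prod_const_one
      rw [h1, h2, h3, mul_one, prod_sign_neg a ha hodd]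
  calc ((∑ i, a i * (s i * s (cycSucc i)) : ℤ) : ℝ) ≤ (((n : ℤ) - 2 : ℤ) : ℝ) := by
        exact_mod_cast hZ
    _ = (n : ℝ) - 2 := by push_cast; ring

theorem statement_3 (n : ℕ) (hn : 3 ≤ n) (a : Fin n → ℤ) (ha : IsSign a)
    (hodd : IsOddSign a) (B : Behavior (cycleScenario n hn)) (hB : IsNC _ B) :
    Ifun hn a B ≤ (n : ℝ) - 2 := by
  obtain ⟨p, hp0, hp1, hpB⟩ := hB
  have hBsum : ∀ (γ : (cycleScenario n hn).Ctx) t,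
      B γ t = ∑ o, p o * detB _ o γ t := by
    intro γ t
    rw [hpB]
    refine Finset.sum_congr rfl fun o _ => ?_
    unfold detB
    split <;> simp
  have hcorr : ∀ γ, corrCtx (hn := hn) B γ = ∑ o, p o * corrCtx (detB _ o) γ := by
    intro γ
    unfold corrCtx
    simp_rw [hBsum, Finset.mul_sum]
    rw [Finset.sum_comm]
    refine Finset.sum_congr rfl fun o _ => ?_
    refine Finset.sum_congr rfl fun t _ => by ring
  have hI : Ifun hn a B = ∑ o, p o * Ifun hn a (detB _ o) := by
    unfold Ifun
    simp_rw [hcorr, Finset.mul_sum]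
    rw [Finset.sum_comm]
    refine Finset.sum_congr rfl fun o _ => ?_
    refine Finset.sum_congr rfl fun i _ => by ring
  rw [hI]
  calc ∑ o, p o * Ifun hn a (detB _ o) ≤ ∑ o, p o * ((n : ℝ) - 2) := by
        refine Finset.sum_le_sum fun o _ => ?_
        exact mul_le_mul_of_nonneg_left (Ifun_detB_le hn a ha hodd o) (hp0 o)
    _ = (n : ℝ) - 2 := by rw [← Finset.sum_mul, hp1, one_mul]
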